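/- Let l : ZMod n → ℤ² be toric fan data with self-intersection numbers a_i, let i ∈ ZMod n, and let d be an integer with 2 ≤ d ≤ n − 1. If det(l_i, l_{i+d}) = 1, then there exists an integer e with 1 ≤ e ≤ d − 1 such that a_{i+e} = −1. (This is the combinatorial inductive step of the Miyake–Oda proposition: if l_i and l_{i+d} form a positively oriented basis of ℤ², the rays strictly between them can be removed by a sequence of blow-downs.) -/
import Mathlib


/-- The determinant of two vectors in `ℤ²`. -/
def det2 (u v : ℤ × ℤ) : ℤ := u.1 * v.2 - u.2 * v.1

/-- Toric fan data: a cyclic family `l : ZMod n → ℤ²` such that each consecutive pair is a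
positively oriented `ℤ`-basis of `ℤ²`, and no other `l k` lies in the nonnegative span of a
consecutive pair.  This encodes a smooth complete toric surface. -/
def IsToricFanData (n : ℕ) (l : ZMod n → ℤ × ℤ) : Prop :=
  (∀ i : ZMod n, det2 (l i) (l (i + 1)) = 1) ∧
  (∀ i k : ZMod n, k ≠ i → k ≠ i + 1 →
    ¬ ∃ α β : ℤ, 0 ≤ α ∧ 0 ≤ β ∧ l k = α • l i + β • l (i + 1))

lemma det2_lin (u x y z : ℤ × ℤ) (c : ℤ) (h : x + c • y + z = 0) :
    det2 u x + c * det2 u y + det2 u z = 0 := by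
  have h1 : x.1 + c * y.1 + z.1 = 0 := by
    have := congrArg Prod.fst h; simpa using this
  have h2 : x.2 + c * y.2 + z.2 = 0 := by
    have := congrArg Prod.snd h; simpa using this
  simp only [det2]
  linear_combination u.1 * h2 - u.2 * h1

lemma det2_swap (u v : ℤ × ℤ) : det2 u v = - det2 v u := by
  simp only [det2]; ring

lemma basis_expand (u v w : ℤ × ℤ) (h : det2 u v = 1) :
    w = det2 w v • u + det2 u w • v := by
  have h' : u.1 * v.2 - u.2 * v.1 = 1 := h
  have e1 : w.1 = (w.1 * v.2 - w.2 * v.1) * u.1 + (u.1 * w.2 - u.2 * w.1) * v.1 := by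
    linear_combination (-w.1) * h'
  have e2 : w.2 = (w.1 * v.2 - w.2 * v.1) * u.2 + (u.1 * w.2 - u.2 * w.1) * v.2 := by
    linear_combination (-w.2) * h'
  apply Prod.ext <;> simpa [det2]

lemma natCast_zmod_ne_zero (n k : ℕ) [NeZero n] (h1 : 0 < k) (h2 : k < n) :
    (k : ZMod n) ≠ 0 := by
  intro h
  rw [ZMod.natCast_eq_zero_iff] at h
  exact absurd (Nat.le_of_dvd h1 h) (by omega)

/-- (Combinatorial Miyake–Oda blow-down step.)  For toric fan data
`l : ZMod n → ℤ²` with self-intersection numbers `a i`, if `l i` and `l (i + d)` (with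
`2 ≤ d ≤ n - 1`) form a positively oriented basis of `ℤ²`, then some ray strictly between
them has self-intersection `-1`. -/
theorem toric_fan_data_blowdown_between_basis
    (n : ℕ) (hn : 3 ≤ n) [NeZero n]
    (l : ZMod n → ℤ × ℤ) (hl : IsToricFanData n l)
    (a : ZMod n → ℤ)
    (ha : ∀ i : ZMod n, l (i - 1) + a i • l i + l (i + 1) = 0)
    (i : ZMod n) (d : ℕ) (hd2 : 2 ≤ d) (hdn : d ≤ n - 1)
    (hdet : det2 (l i) (l (i + (d : ZMod n))) = 1) :
    ∃ e : ℕ, 1 ≤ e ∧ e ≤ d - 1 ∧ a (i + (e : ZMod n)) = -1 := by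
  set s : ℕ → ℤ := fun k => det2 (l i) (l (i + (k : ZMod n))) with hsdef
  have hs0 : s 0 = 0 := by
    simp only [hsdef, Nat.cast_zero, add_zero, det2]; ring
  have hs1 : s 1 = 1 := by
    simpa only [hsdef, Nat.cast_one] using hl.1 i
  have hsd : s d = 1 := hdet
  -- the three-term recurrence
  have hrec : ∀ m : ℕ, s m + a (i + ((m + 1 : ℕ) : ZMod n)) * s (m + 1) + s (m + 2) = 0 := by
    intro m
    have h := ha (i + ((m + 1 : ℕ) : ZMod n))
    have e1 : i + ((m + 1 : ℕ) : ZMod n) - 1 = i + (m : ZMod n) := by push_cast; ring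
    have e2 : i + ((m + 1 : ℕ) : ZMod n) + 1 = i + ((m + 2 : ℕ) : ZMod n) := by push_cast; ring
    rw [e1, e2] at h
    exact det2_lin (l i) _ _ _ _ h
  -- convexity condition from part (b) of the fan data
  have hstar : ∀ m : ℕ, m + 2 ≤ d → s (m + 1) ≤ 0 → s (m + 2) < 0 := by
    intro m hm hle
    by_contra hge
    push_neg at hge
    have hne1 : ((m + 1 : ℕ) : ZMod n) ≠ 0 := natCast_zmod_ne_zero n (m + 1) (by omega) (by omega)
    have hne2 : ((m + 2 : ℕ) : ZMod n) ≠ 0 := natCast_zmod_ne_zero n (m + 2) (by omega) (by omega)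
    have e2 : i + ((m + 1 : ℕ) : ZMod n) + 1 = i + ((m + 2 : ℕ) : ZMod n) := by push_cast; ring
    have hki : i ≠ i + ((m + 1 : ℕ) : ZMod n) := by
      intro h; exact hne1 (left_eq_add.mp h)
    have hki1 : i ≠ i + ((m + 1 : ℕ) : ZMod n) + 1 := by
      rw [e2]; intro h; exact hne2 (left_eq_add.mp h)
    apply hl.2 (i + ((m + 1 : ℕ) : ZMod n)) i hki hki1
    refine ⟨s (m + 2), - s (m + 1), hge, by linarith, ?_⟩
    have hb := basis_expand (l (i + ((m + 1 : ℕ) : ZMod n)))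
      (l (i + ((m + 1 : ℕ) : ZMod n) + 1)) (l i) (hl.1 _)
    rw [e2] at hb ⊢
    have hc : det2 (l (i + ((m + 1 : ℕ) : ZMod n))) (l i) = - s (m + 1) := by
      rw [det2_swap]
    rw [hc] at hb
    exact hb
  -- once nonpositive, stays negative
  have hneg : ∀ t m : ℕ, m + 2 + t ≤ d → s (m + 1) ≤ 0 → s (m + 2 + t) < 0 := by
    intro t
    induction t with
    | zero => intro m hm h; exact hstar m hm h
    | succ t ih =>
      intro m hm h
      have h1 : s (m + 2 + t) < 0 := ih m (by omega) h
      have h1' : s (m + 1 + t + 1) ≤ 0 := by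
        rw [show m + 1 + t + 1 = m + 2 + t from by omega]; exact le_of_lt h1
      have h2 := hstar (m + 1 + t) (by omega) h1'
      rwa [show m + 1 + t + 2 = m + 2 + (t + 1) from by omega] at h2
  -- positivity of all intermediate determinants
  have hpos : ∀ k, 1 ≤ k → k ≤ d → 0 < s k := by
    intro k h1 h2
    by_contra hge
    push_neg at hge
    rcases eq_or_lt_of_le h2 with rfl | hlt
    · rw [hsd] at hge; linarith
    · have hd0 : s d < 0 := by
        have h3 := hneg (d - k - 1) (k - 1) (by omega)
          (by rw [show k - 1 + 1 = k from by omega]; exact hge)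
        rwa [show k - 1 + 2 + (d - k - 1) = d from by omega] at h3
      rw [hsd] at hd0; linarith
  by_contra hcon
  push_neg at hcon
  -- growth: if no a = -1, the determinants strictly increase
  have hgrow : ∀ m : ℕ, m + 1 ≤ d → ((m : ℤ) + 1 ≤ s (m + 1) ∧ s m + 1 ≤ s (m + 1)) := by
    intro m
    induction m with
    | zero => intro _; rw [hs0, hs1]; norm_num
    | succ m ih =>
      intro hm
      obtain ⟨ih1, ih2⟩ := ih (by omega)
      have hr := hrec m
      have hApos : 0 < s (m + 2) := hpos (m + 2) (by omega) (by omega)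
      have hsm : 0 ≤ s m := by
        rcases Nat.eq_zero_or_pos m with h | h
        · rw [h, hs0]
        · exact le_of_lt (hpos m h (by omega))
      have hs1pos : 0 < s (m + 1) := hpos (m + 1) (by omega) (by omega)
      have hAne : a (i + ((m + 1 : ℕ) : ZMod n)) ≠ -1 := hcon (m + 1) (by omega) (by omega)
      have hAle : a (i + ((m + 1 : ℕ) : ZMod n)) ≤ -1 := by nlinarith
      have hA2 : a (i + ((m + 1 : ℕ) : ZMod n)) ≤ -2 := by omega
      have key : s (m + 1) + 1 ≤ s (m + 2) := by nlinarith
      constructor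
      · push_cast
        rw [show m + 1 + 1 = m + 2 from rfl]
        linarith
      · rw [show m + 1 + 1 = m + 2 from rfl]
        exact key
  have hfin := (hgrow (d - 1) (by omega)).1
  rw [show d - 1 + 1 = d from by omega, hsd] at hfin
  have : ((d : ℤ) - 1) + 1 ≤ 1 := by
    have : ((d - 1 : ℕ) : ℤ) = (d : ℤ) - 1 := by push_cast [Nat.cast_sub (by omega : 1 ≤ d)]; ring
    linarith [hfin, this.symm ▸ hfin]
  omega
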